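/- arXiv:1804.00951 — 2 statements merged into one kernel-verified Lean document; each statement's English description precedes it below -/
import Mathlib

section
/- C decomposes as C = {0} ∪ ⋃_{n ∈ ℕ} T₀^n '' C₁ ∪ ⋃_{n ∈ ℕ} T₀^n '' C₋₁, where T₀^n denotes the n-th iterate of T₀. -/
noncomputable section

/-- The affine contraction of ratio 1/100 fixing 0. -/
def T0 (x : ℝ) : ℝ := x / 100

/-- The affine contraction of ratio 1/100 fixing 1. -/
def T1 (x : ℝ) : ℝ := 1 + (x - 1) / 100

/-- The affine contraction of ratio 1/100 fixing -1. -/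
def Tm1 (x : ℝ) : ℝ := -1 + (x + 1) / 100

lemma T0_iter (n : ℕ) (y : ℝ) : T0^[n] y = y / 100 ^ n := by
  induction n generalizing y with
  | zero => simp
  | succ n ih =>
    rw [Function.iterate_succ_apply, ih]
    unfold T0
    rw [pow_succ]
    ring

theorem stmt_4 (C : Set ℝ) (hne : C.Nonempty) (hcomp : IsCompact C)
    (hself : C = Tm1 '' C ∪ T0 '' C ∪ T1 '' C) :
    C = {0} ∪ (⋃ n : ℕ, T0^[n] '' (T1 '' C)) ∪ (⋃ n : ℕ, T0^[n] '' (Tm1 '' C)) := by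
  have hT0 : T0 '' C ⊆ C := fun x hx => hself ▸ Or.inl (Or.inr hx)
  have hT1 : T1 '' C ⊆ C := fun x hx => hself ▸ Or.inr hx
  have hTm1 : Tm1 '' C ⊆ C := fun x hx => hself ▸ Or.inl (Or.inl hx)
  have hsub : ∀ S, S ⊆ C → ∀ n : ℕ, T0^[n] '' S ⊆ C := by
    intro S hS n
    induction n with
    | zero => simpa using hS
    | succ n ih =>
      rw [Function.iterate_succ', Set.image_comp]
      exact (Set.image_mono ih).trans hT0
  -- C is bounded
  obtain ⟨M, hM⟩ : ∃ M : ℝ, ∀ y ∈ C, |y| ≤ M := by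
    obtain ⟨M, hM⟩ := hcomp.isBounded.subset_ball 0
    exact ⟨M, fun y hy => by
      have := hM hy
      simp [Metric.mem_ball, Real.dist_eq] at this
      linarith [abs_nonneg y]⟩
  have h0 : (0 : ℝ) ∈ C := by
    obtain ⟨x0, hx0⟩ := hne
    have hmem : ∀ n : ℕ, T0^[n] x0 ∈ C := fun n => hsub C le_rfl n ⟨x0, hx0, rfl⟩
    have htend : Filter.Tendsto (fun n : ℕ => T0^[n] x0) Filter.atTop (nhds 0) := by
      simp only [T0_iter]
      have h := tendsto_pow_atTop_nhds_zero_of_lt_one (by norm_num : (0:ℝ) ≤ 1/100)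
        (by norm_num : (1:ℝ)/100 < 1)
      have := h.const_mul x0
      simp only [mul_zero] at this
      convert this using 2 with n
      rw [div_eq_mul_inv, ← inv_pow]
      norm_num
    exact hcomp.isClosed.mem_of_tendsto htend (Filter.Eventually.of_forall hmem)
  apply Set.Subset.antisymm
  · intro x hx
    by_cases hx1 : x ∈ (⋃ n : ℕ, T0^[n] '' (T1 '' C))
    · exact Or.inl (Or.inr hx1)
    by_cases hx2 : x ∈ (⋃ n : ℕ, T0^[n] '' (Tm1 '' C))
    · exact Or.inr hx2
    -- show x = 0
    left; left
    have key : ∀ n : ℕ, x ∈ T0^[n] '' C := by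
      intro n
      induction n with
      | zero => simpa using hx
      | succ n ih =>
        obtain ⟨y, hy, rfl⟩ := ih
        rw [hself] at hy
        rcases hy with (hy | hy) | hy
        · exact absurd (Set.mem_iUnion.mpr ⟨n, Set.mem_image_of_mem _ hy⟩) hx2
        · obtain ⟨z, hz, rfl⟩ := hy
          exact ⟨z, hz, by rw [Function.iterate_succ_apply]⟩
        · exact absurd (Set.mem_iUnion.mpr ⟨n, Set.mem_image_of_mem _ hy⟩) hx1
    have habs : ∀ n : ℕ, |x| * 100 ^ n ≤ M := by
      intro n
      obtain ⟨y, hy, rfl⟩ := key n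
      rw [T0_iter, abs_div, abs_of_pos (by positivity : (0:ℝ) < 100 ^ n),
        div_mul_cancel₀]
      · exact hM y hy
      · positivity
    by_contra hxne
    have hxpos : 0 < |x| := abs_pos.mpr hxne
    obtain ⟨n, hn⟩ := pow_unbounded_of_one_lt (M / |x|) (by norm_num : (1:ℝ) < 100)
    have := habs n
    rw [div_lt_iff₀ hxpos] at hn
    nlinarith
  · rintro x ((hx | hx) | hx)
    · simp only [Set.mem_singleton_iff] at hx
      exact hx ▸ h0
    · obtain ⟨n, hn⟩ := Set.mem_iUnion.mp hx
      exact hsub _ hT1 n hn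
    · obtain ⟨n, hn⟩ := Set.mem_iUnion.mp hx
      exact hsub _ hTm1 n hn
end
end

section
/- K₊ is symmetric under the reflection x ↦ −x: for every x ∈ ℝ, x ∈ K₊ if and only if −x ∈ K₊. -/
noncomputable section

/-- The inverse of `T0`. -/
def T0inv (x : ℝ) : ℝ := 100 * x

/-- The `i`-th iterate of `T0` for `i ≥ 0`, and the `|i|`-th iterate of
`T0⁻¹ : x ↦ 100 x` for `i < 0`. -/
def T0z : ℤ → ℝ → ℝ
  | Int.ofNat n => T0^[n]
  | Int.negSucc n => T0inv^[n + 1]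

/-- The set `K₊ = {0} ∪ ⋃ i ∈ ℤ, T₀^[i] '' (C₁ ∪ C₋₁)` where `C₁ = T₁ '' C`,
`C₋₁ = T₋₁ '' C`. -/
def Kplus (C : Set ℝ) : Set ℝ := {0} ∪ ⋃ i : ℤ, T0z i '' (T1 '' C ∪ Tm1 '' C)

lemma iterate_neg (f : ℝ → ℝ) (h : ∀ x, f (-x) = -f x) :
    ∀ n x, f^[n] (-x) = -f^[n] x := by
  intro n
  induction n with
  | zero => simp
  | succ n ih =>
    intro x
    rw [Function.iterate_succ_apply, h, ih]
    rw [← Function.iterate_succ_apply]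

lemma T0z_neg (i : ℤ) (x : ℝ) : T0z i (-x) = -T0z i x := by
  cases i with
  | ofNat n =>
    exact iterate_neg T0 (fun x => by simp [T0, neg_div]) n x
  | negSucc n =>
    exact iterate_neg T0inv (fun x => by simp [T0inv]) (n + 1) x

/-- The key approximation lemma: every point of `C` is within `2R/100^n` of `-C`. -/
lemma approx (C : Set ℝ) (hne : C.Nonempty)
    (hself : C = Tm1 '' C ∪ T0 '' C ∪ T1 '' C)
    (R : ℝ) (hR : ∀ x ∈ C, |x| ≤ R) :
    ∀ n : ℕ, ∀ x ∈ C, ∃ y ∈ C, |x + y| ≤ 2 * R / 100 ^ n := by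
  intro n
  induction n with
  | zero =>
    intro x hx
    obtain ⟨y, hy⟩ := hne
    refine ⟨y, hy, ?_⟩
    calc |x + y| ≤ |x| + |y| := abs_add_le _ _
      _ ≤ R + R := add_le_add (hR x hx) (hR y hy)
      _ = 2 * R / 100 ^ 0 := by ring
  | succ n ih =>
    intro x hx
    rw [hself] at hx
    rcases hx with (⟨a, ha, rfl⟩ | ⟨a, ha, rfl⟩) | ⟨a, ha, rfl⟩
    · -- x = Tm1 a, take y = T1 b
      obtain ⟨b, hb, hab⟩ := ih a ha
      refine ⟨T1 b, ?_, ?_⟩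
      · rw [hself]; exact Or.inr ⟨b, hb, rfl⟩
      · have : Tm1 a + T1 b = (a + b) / 100 := by simp [Tm1, T1]; ring
        rw [this, abs_div]
        rw [abs_of_pos (by norm_num : (0:ℝ) < 100)]
        rw [div_le_div_iff₀ (by norm_num) (by positivity)]
        calc |a + b| * 100 ^ (n + 1) ≤ (2 * R / 100 ^ n) * 100 ^ (n+1) := by
              apply mul_le_mul_of_nonneg_right hab (by positivity)
          _ = 2 * R * 100 := by field_simp; ring
    · -- x = T0 a, take y = T0 b
      obtain ⟨b, hb, hab⟩ := ih a ha
      refine ⟨T0 b, ?_, ?_⟩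
      · rw [hself]; exact Or.inl (Or.inr ⟨b, hb, rfl⟩)
      · have : T0 a + T0 b = (a + b) / 100 := by simp [T0]; ring
        rw [this, abs_div]
        rw [abs_of_pos (by norm_num : (0:ℝ) < 100)]
        rw [div_le_div_iff₀ (by norm_num) (by positivity)]
        calc |a + b| * 100 ^ (n + 1) ≤ (2 * R / 100 ^ n) * 100 ^ (n+1) := by
              apply mul_le_mul_of_nonneg_right hab (by positivity)
          _ = 2 * R * 100 := by field_simp; ring
    · -- x = T1 a, take y = Tm1 b
      obtain ⟨b, hb, hab⟩ := ih a ha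
      refine ⟨Tm1 b, ?_, ?_⟩
      · rw [hself]; exact Or.inl (Or.inl ⟨b, hb, rfl⟩)
      · have : T1 a + Tm1 b = (a + b) / 100 := by simp [Tm1, T1]; ring
        rw [this, abs_div]
        rw [abs_of_pos (by norm_num : (0:ℝ) < 100)]
        rw [div_le_div_iff₀ (by norm_num) (by positivity)]
        calc |a + b| * 100 ^ (n + 1) ≤ (2 * R / 100 ^ n) * 100 ^ (n+1) := by
              apply mul_le_mul_of_nonneg_right hab (by positivity)
          _ = 2 * R * 100 := by field_simp; ring

lemma neg_mem_C (C : Set ℝ) (hne : C.Nonempty) (hcomp : IsCompact C)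
    (hself : C = Tm1 '' C ∪ T0 '' C ∪ T1 '' C) :
    ∀ x ∈ C, -x ∈ C := by
  obtain ⟨R, hR0, hR⟩ : ∃ R : ℝ, 0 < R ∧ ∀ x ∈ C, |x| ≤ R := by
    obtain ⟨R, hR⟩ := hcomp.isBounded.subset_closedBall 0
    exact ⟨max R 1, lt_of_lt_of_le one_pos (le_max_right _ _), fun x hx => by
      have := hR hx
      simp [Metric.mem_closedBall, Real.dist_eq] at this
      exact le_trans this (le_max_left _ _)⟩
  intro x hx
  have hclosed : IsClosed C := hcomp.isClosed
  rw [← hclosed.closure_eq]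
  rw [Metric.mem_closure_iff]
  intro ε hε
  obtain ⟨n, hn⟩ : ∃ n : ℕ, 2 * R / 100 ^ n < ε := by
    obtain ⟨n, hn⟩ := pow_unbounded_of_one_lt (2 * R / ε) (by norm_num : (1:ℝ) < 100)
    refine ⟨n, ?_⟩
    rw [div_lt_iff₀ (by positivity)]
    calc 2 * R = (2 * R / ε) * ε := by field_simp
      _ < 100 ^ n * ε := by apply mul_lt_mul_of_pos_right hn hε
      _ = ε * 100 ^ n := by ring
  obtain ⟨y, hy, hxy⟩ := approx C hne hself R hR n x hx
  refine ⟨y, hy, ?_⟩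
  rw [Real.dist_eq]
  calc |(-x) - y| = |x + y| := by rw [← abs_neg]; ring_nf
    _ ≤ 2 * R / 100 ^ n := hxy
    _ < ε := hn

theorem stmt_7 (C : Set ℝ) (hne : C.Nonempty) (hcomp : IsCompact C)
    (hself : C = Tm1 '' C ∪ T0 '' C ∪ T1 '' C) :
    ∀ x : ℝ, x ∈ Kplus C ↔ -x ∈ Kplus C := by
  have hneg := neg_mem_C C hne hcomp hself
  -- one direction suffices
  have main : ∀ x : ℝ, x ∈ Kplus C → -x ∈ Kplus C := by
    intro x hx
    rcases hx with h0 | hx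
    · left; simp at h0 ⊢; simp [h0]
    · right
      simp only [Set.mem_iUnion] at hx ⊢
      obtain ⟨i, z, hz, rfl⟩ := hx
      refine ⟨i, -z, ?_, T0z_neg i z⟩
      rcases hz with ⟨c, hc, rfl⟩ | ⟨c, hc, rfl⟩
      · right
        refine ⟨-c, hneg c hc, ?_⟩
        simp [T1, Tm1]; ring
      · left
        refine ⟨-c, hneg c hc, ?_⟩
        simp [T1, Tm1]; ring
  intro x
  constructor
  · exact main x
  · intro h
    have := main (-x) h
    simpa using this
end
end
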